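/- Let a ∈ [0,1] and let x, y > 0 be real numbers satisfying |a·x − y| ≤ 1 + a. Then |(x + y)·√(a² + 1)/(a + 1) − √(x² + y²)| ≤ 1. -/

import Mathlib

/-- For `a ∈ [0,1]` and reals `x, y > 0` with `|a*x - y| ≤ 1 + a`,
`|(x + y) * (√(a² + 1) / (a + 1)) - √(x² + y²)| ≤ 1`. -/
theorem stmt3 (a x y : ℝ) (ha : a ∈ Set.Icc (0 : ℝ) 1) (hx : 0 < x) (hy : 0 < y)
    (h : |a * x - y| ≤ 1 + a) :
    |(x + y) * (Real.sqrt (a ^ 2 + 1) / (a + 1)) - Real.sqrt (x ^ 2 + y ^ 2)| ≤ 1 := by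
  obtain ⟨ha0, ha1⟩ := ha
  set s := Real.sqrt (a ^ 2 + 1) with hs_def
  set t := Real.sqrt (x ^ 2 + y ^ 2) with ht_def
  have hs2 : s ^ 2 = a ^ 2 + 1 := Real.sq_sqrt (by positivity)
  have ht2 : t ^ 2 = x ^ 2 + y ^ 2 := Real.sq_sqrt (by positivity)
  have hs1 : 1 ≤ s := by
    rw [show (1 : ℝ) = Real.sqrt 1 by simp, hs_def]
    exact Real.sqrt_le_sqrt (by nlinarith)
  have ht0 : 0 < t := Real.sqrt_pos.mpr (by positivity)
  have ha1' : 0 < a + 1 := by linarith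
  set S := (x + y) * (s / (a + 1)) with hS_def
  have hS0 : 0 < S := by positivity
  have hSs : S * (a + 1) = (x + y) * s := by
    rw [hS_def, mul_assoc, div_mul_cancel₀ _ ha1'.ne']
  have h1 : |x - a * y| ≤ (a + 1) * t := by
    have hsq : (x - a * y) ^ 2 ≤ ((a + 1) * t) ^ 2 := by nlinarith [sq_nonneg (a * x + y)]
    rw [abs_le]
    constructor <;> nlinarith [mul_pos ha1' ht0, sq_nonneg (x - a * y + (a + 1) * t),
      sq_nonneg (x - a * y - (a + 1) * t)]
  have h2 : |x - a * y| ≤ (a + 1) * S := by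
    have hb : |x - a * y| ≤ x + y := by
      rw [abs_le]; constructor <;> nlinarith
    have : (a + 1) * S = (x + y) * s := by rw [mul_comm]; exact hSs
    rw [this]
    nlinarith
  have hsq : S ^ 2 * (a + 1) ^ 2 = (x + y) ^ 2 * (a ^ 2 + 1) := by
    have := congrArg (· ^ 2) hSs
    simp only [mul_pow] at this
    rw [this, hs2]
  have key : (S - t) * (S + t) * (a + 1) ^ 2 = -2 * (a * x - y) * (x - a * y) := by
    linear_combination hsq - (a + 1) ^ 2 * ht2
  have hpos : 0 < (S + t) * (a + 1) ^ 2 := by positivity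
  have e : |S - t| * ((S + t) * (a + 1) ^ 2) = 2 * |a * x - y| * |x - a * y| := by
    rw [← abs_of_pos hpos, ← abs_mul, ← mul_assoc, key, abs_mul, abs_mul]
    norm_num
  have habs : |S - t| * ((S + t) * (a + 1) ^ 2) ≤ 1 * ((S + t) * (a + 1) ^ 2) := by
    rw [e, one_mul]
    have s1 : |a * x - y| * |x - a * y| ≤ (1 + a) * |x - a * y| :=
      mul_le_mul_of_nonneg_right h (abs_nonneg _)
    have s2 : (1 + a) * |x - a * y| ≤ (1 + a) * ((a + 1) * t) :=
      mul_le_mul_of_nonneg_left h1 (by linarith)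
    have s3 : (1 + a) * |x - a * y| ≤ (1 + a) * ((a + 1) * S) :=
      mul_le_mul_of_nonneg_left h2 (by linarith)
    linarith [s1, s2, s3]
  exact le_of_mul_le_mul_right habs hpos
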